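/- (One iteration of the two-stage hard thresholding algorithm; Theorem 5 one-step descent.) Let x* ∈ ℝ^n be k-sparse with every nonzero entry of absolute value 1, and b = Ax*. Suppose A satisfies the RIP of order 2k+l with constant δ_{2k+l} ≤ 0.35 (and hence RIP of each order s ≤ 2k+l with constant at most δ_{2k+l}). Let x^t be a least-squares solution on a support I_t with |I_t| = k, set g = Aᵀ(Ax^t − b) and MD = supp(x*)\I_t. Let T ⊆ I_tᶜ with |T| = l satisfy |g_j| ≥ |g_{j'}| for all j ∈ T, j' ∈ I_tᶜ\T, set J = I_t ∪ T, let z be a least-squares solution on support J, let S ⊆ J with |S| = k satisfy |z_j| ≥ |z_{j'}| for all j ∈ S, j' ∈ J\S, and let x^{t+1} be a least-squares solution on support S. Then f(x^{t+1}) ≤ f(x^t) − 0.0001 · min(l, |MD|). -/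

import Mathlib

open Finset Matrix

noncomputable def nrm {d : ℕ} (x : Fin d → ℝ) : ℝ := Real.sqrt (∑ i, (x i)^2)

noncomputable def supp {d : ℕ} (x : Fin d → ℝ) : Finset (Fin d) := Finset.univ.filter (fun i => x i ≠ 0)

def restr {d : ℕ} (x : Fin d → ℝ) (I : Finset (Fin d)) : Fin d → ℝ := fun i => if i ∈ I then x i else 0

noncomputable def dotp {d : ℕ} (x y : Fin d → ℝ) : ℝ := ∑ i, x i * y i

def RIP {m n : ℕ} (A : Matrix (Fin m) (Fin n) ℝ) (s : ℕ) (δ : ℝ) : Prop :=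
  0 ≤ δ ∧ δ < 1 ∧ ∀ x : Fin n → ℝ, (supp x).card ≤ s →
    (1 - δ) * (nrm x)^2 ≤ (nrm (A.mulVec x))^2 ∧ (nrm (A.mulVec x))^2 ≤ (1 + δ) * (nrm x)^2

def lsSol {m n : ℕ} (A : Matrix (Fin m) (Fin n) ℝ) (b : Fin m → ℝ) (I : Finset (Fin n)) (x : Fin n → ℝ) : Prop :=
  supp x ⊆ I ∧ ∀ i ∈ I, Aᵀ.mulVec (A.mulVec x - b) i = 0

noncomputable def obj {m n : ℕ} (A : Matrix (Fin m) (Fin n) ℝ) (b : Fin m → ℝ) (x : Fin n → ℝ) : ℝ :=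
  (1/2) * (nrm (A.mulVec x - b))^2

section helpers
variable {m n d : ℕ}

lemma mem_supp {x : Fin d → ℝ} {i : Fin d} : i ∈ supp x ↔ x i ≠ 0 := by simp [supp]

lemma supp_subset {x : Fin d → ℝ} {E : Finset (Fin d)}
    (h : ∀ i, x i ≠ 0 → i ∈ E) : supp x ⊆ E := fun i hi => h i (mem_supp.mp hi)

lemma nrm_sq (x : Fin d → ℝ) : (nrm x)^2 = ∑ i, (x i)^2 :=
  Real.sq_sqrt (Finset.sum_nonneg fun i _ => sq_nonneg _)

lemma obj_eq (A : Matrix (Fin m) (Fin n) ℝ) (b : Fin m → ℝ) (x : Fin n → ℝ) :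
    obj A b x = (1/2) * ∑ i, ((A.mulVec x - b) i)^2 := by rw [obj, nrm_sq]

lemma sum_sq_restr (x : Fin d → ℝ) (E : Finset (Fin d)) :
    ∑ i, (restr x E i)^2 = ∑ i ∈ E, (x i)^2 := by
  have h1 : ∑ i ∈ E, (restr x E i)^2 = ∑ i, (restr x E i)^2 :=
    Finset.sum_subset (Finset.subset_univ E) (fun i _ hi => by simp [restr, hi])
  rw [← h1]
  exact Finset.sum_congr rfl (fun i hi => by simp [restr, hi])

lemma supp_restr (x : Fin d → ℝ) (E : Finset (Fin d)) : supp (restr x E) ⊆ E := by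
  apply supp_subset
  intro i hi
  by_contra h
  simp [restr, h] at hi

lemma dotp_comm (x y : Fin d → ℝ) : dotp x y = dotp y x := by simp [dotp, mul_comm]

lemma dotp_A (A : Matrix (Fin m) (Fin n) ℝ) (x : Fin m → ℝ) (v : Fin n → ℝ) :
    dotp x (A.mulVec v) = dotp (Aᵀ.mulVec x) v := by
  show x ⬝ᵥ A.mulVec v = Aᵀ.mulVec x ⬝ᵥ v
  rw [Matrix.dotProduct_mulVec, Matrix.mulVec_transpose]

lemma dotp_restr (x y : Fin d → ℝ) (E : Finset (Fin d)) :
    dotp (restr x E) y = ∑ i ∈ E, x i * y i := by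
  rw [dotp]
  have h1 : ∑ i ∈ E, restr x E i * y i = ∑ i, restr x E i * y i :=
    Finset.sum_subset (Finset.subset_univ E) (fun i _ hi => by simp [restr, hi])
  rw [← h1]
  exact Finset.sum_congr rfl (fun i hi => by simp [restr, hi])

lemma mv_lin (A : Matrix (Fin m) (Fin n) ℝ) (c e : ℝ) (p q : Fin n → ℝ) :
    A.mulVec (fun i => c * p i + e * q i) = fun j => c * A.mulVec p j + e * A.mulVec q j := by
  funext j
  simp only [Matrix.mulVec, dotProduct, Finset.mul_sum, ← Finset.sum_add_distrib]
  exact Finset.sum_congr rfl fun i _ => by ring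

lemma mv_sub (A : Matrix (Fin m) (Fin n) ℝ) (p q : Fin n → ℝ) :
    A.mulVec (fun i => p i - q i) = fun j => A.mulVec p j - A.mulVec q j := by
  have := mv_lin A 1 (-1) p q
  simpa [sub_eq_add_neg] using this

lemma rip_low {A : Matrix (Fin m) (Fin n) ℝ} {s : ℕ} {δ : ℝ} (h : RIP A s δ) {x : Fin n → ℝ}
    (hx : (supp x).card ≤ s) : (1-δ) * ∑ i, (x i)^2 ≤ ∑ i, (A.mulVec x i)^2 := by
  have := (h.2.2 x hx).1; rwa [nrm_sq, nrm_sq] at this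

lemma rip_up {A : Matrix (Fin m) (Fin n) ℝ} {s : ℕ} {δ : ℝ} (h : RIP A s δ) {x : Fin n → ℝ}
    (hx : (supp x).card ≤ s) : ∑ i, (A.mulVec x i)^2 ≤ (1+δ) * ∑ i, (x i)^2 := by
  have := (h.2.2 x hx).2; rwa [nrm_sq, nrm_sq] at this

lemma ki {I : Finset (Fin n)} {x y : Fin n → ℝ} (A : Matrix (Fin m) (Fin n) ℝ) (b : Fin m → ℝ)
    (hx : lsSol A b I x) (hy : supp y ⊆ I) :
    ∑ i, ((A.mulVec y - b) i)^2
      = ∑ i, ((A.mulVec x - b) i)^2 + ∑ i, (A.mulVec (fun j => y j - x j) i)^2 := by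
  have hpt : ∀ i, (A.mulVec y - b) i = (A.mulVec x - b) i + A.mulVec (fun j => y j - x j) i := by
    intro i
    simp only [mv_sub A y x, Pi.sub_apply]
    ring
  have hcross : ∑ i, (A.mulVec x - b) i * A.mulVec (fun j => y j - x j) i = 0 := by
    have h1 : dotp (A.mulVec x - b) (A.mulVec (fun j => y j - x j)) = 0 := by
      rw [dotp_A]
      apply Finset.sum_eq_zero
      intro i _
      by_cases hiI : i ∈ I
      · rw [hx.2 i hiI, zero_mul]
      · have hyi : y i = 0 := by
          by_contra hne; exact hiI (hy (mem_supp.mpr hne))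
        have hxi : x i = 0 := by
          by_contra hne; exact hiI (hx.1 (mem_supp.mpr hne))
        simp [hyi, hxi]
    exact h1
  have hexp : ∑ i, ((A.mulVec y - b) i)^2
      = ∑ i, (((A.mulVec x - b) i)^2 + (A.mulVec (fun j => y j - x j) i)^2
          + 2 * ((A.mulVec x - b) i * A.mulVec (fun j => y j - x j) i)) := by
    exact Finset.sum_congr rfl fun i _ => by rw [hpt i]; ring
  rw [hexp, Finset.sum_add_distrib, Finset.sum_add_distrib, ← Finset.mul_sum, hcross]
  ring

lemma cross {A : Matrix (Fin m) (Fin n) ℝ} {s : ℕ} {δ : ℝ} (h : RIP A s δ)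
    (p q : Fin n → ℝ) (c e : ℝ)
    (h1 : (supp (fun i => c * p i + e * q i)).card ≤ s)
    (h2 : (supp (fun i => c * p i - e * q i)).card ≤ s) :
    c * e * dotp p q - c * e * dotp (A.mulVec p) (A.mulVec q)
      ≤ δ/2 * (c^2 * ∑ i, (p i)^2 + e^2 * ∑ i, (q i)^2) := by
  set vp := fun i => c * p i + e * q i with hvp
  set vm := fun i => c * p i - e * q i with hvm
  have hid1 : ∑ i, (vp i)^2 - ∑ i, (vm i)^2 = 4 * (c * e * dotp p q) := by
    rw [← Finset.sum_sub_distrib, dotp, Finset.mul_sum, Finset.mul_sum]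
    exact Finset.sum_congr rfl fun i _ => by simp [hvp, hvm]; ring
  have hAvp : A.mulVec vp = fun j => c * A.mulVec p j + e * A.mulVec q j := mv_lin A c e p q
  have hAvm : A.mulVec vm = fun j => c * A.mulVec p j - e * A.mulVec q j := by
    have := mv_lin A c (-e) p q
    rw [hvm]
    convert this using 2 <;> funext <;> ring
  have hid2 : ∑ i, (A.mulVec vp i)^2 - ∑ i, (A.mulVec vm i)^2
      = 4 * (c * e * dotp (A.mulVec p) (A.mulVec q)) := by
    rw [← Finset.sum_sub_distrib, dotp, Finset.mul_sum, Finset.mul_sum, hAvp, hAvm]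
    exact Finset.sum_congr rfl fun i _ => by ring
  have hpar : ∑ i, (vp i)^2 + ∑ i, (vm i)^2 = 2 * (c^2 * ∑ i, (p i)^2) + 2 * (e^2 * ∑ i, (q i)^2) := by
    have e1 : ∑ i, (vp i)^2 + ∑ i, (vm i)^2 = ∑ i, ((2*c^2) * (p i)^2 + (2*e^2) * (q i)^2) := by
      rw [← Finset.sum_add_distrib]
      exact Finset.sum_congr rfl fun i _ => by simp only [hvp, hvm]; ring
    rw [e1, Finset.sum_add_distrib, ← Finset.mul_sum, ← Finset.mul_sum]
    ring
  have hl := rip_low h h1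
  have hu := rip_up h h2
  have hδ0 : 0 ≤ δ := h.1
  have hvpn : (0:ℝ) ≤ ∑ i, (vp i)^2 := Finset.sum_nonneg fun i _ => sq_nonneg _
  have hvmn : (0:ℝ) ≤ ∑ i, (vm i)^2 := Finset.sum_nonneg fun i _ => sq_nonneg _
  nlinarith [hl, hu, hid1, hid2, hpar]

lemma mv_neg (A : Matrix (Fin m) (Fin n) ℝ) (v : Fin n → ℝ) :
    A.mulVec (fun i => -(v i)) = fun j => -(A.mulVec v j) := by
  funext j
  simp [Matrix.mulVec, dotProduct, mul_neg, Finset.sum_neg_distrib]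

lemma mv_sub_smul (A : Matrix (Fin m) (Fin n) ℝ) (c : ℝ) (p q : Fin n → ℝ) :
    A.mulVec (fun i => p i - c * q i) = fun j => A.mulVec p j - c * A.mulVec q j := by
  have := mv_lin A 1 (-c) p q
  funext j
  have h2 : (fun i => p i - c * q i) = (fun i => 1 * p i + (-c) * q i) := by funext i; ring
  rw [h2, this]
  ring

lemma sum_sq_sub_smul (x y : Fin d → ℝ) (c : ℝ) :
    ∑ i, (x i - c * y i)^2
      = ∑ i, (x i)^2 - 2*c*(∑ i, x i * y i) + c^2 * ∑ i, (y i)^2 := by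
  have e1 : ∑ i, (x i - c * y i)^2
      = ∑ i, ((x i)^2 + ((-(2*c)) * (x i * y i) + c^2 * (y i)^2)) :=
    Finset.sum_congr rfl fun i _ => by ring
  rw [e1, Finset.sum_add_distrib, Finset.sum_add_distrib, ← Finset.mul_sum, ← Finset.mul_sum]
  ring

lemma sq_le_of_abs {a c : ℝ} (h : |a| ≤ |c|) : a^2 ≤ c^2 := by
  have := pow_le_pow_left₀ (abs_nonneg a) h 2
  rwa [sq_abs, sq_abs] at this

lemma cross_restr {A : Matrix (Fin m) (Fin n) ℝ} {s : ℕ} {δ : ℝ} (h : RIP A s δ)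
    (hδ : δ ≤ 0.35) (v : Fin n → ℝ) (E : Finset (Fin n)) (hs : (supp v).card ≤ s)
    (hAdot : dotp (A.mulVec (restr v E)) (A.mulVec v) = 0) :
    ∑ i ∈ E, (v i)^2 ≤ (28/225) * ∑ i, (v i)^2 := by
  have hsupp1 : (supp (fun i => (5:ℝ) * restr v E i + 2 * v i)).card ≤ s := by
    refine le_trans (Finset.card_le_card (supp_subset ?_)) hs
    intro i hi
    rw [mem_supp]
    intro hv
    apply hi
    simp [restr, hv]
  have hsupp2 : (supp (fun i => (5:ℝ) * restr v E i - 2 * v i)).card ≤ s := by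
    refine le_trans (Finset.card_le_card (supp_subset ?_)) hs
    intro i hi
    rw [mem_supp]
    intro hv
    apply hi
    simp [restr, hv]
  have hc := cross h (restr v E) v 5 2 hsupp1 hsupp2
  rw [hAdot, dotp_restr, sum_sq_restr] at hc
  have hcongr : ∑ i ∈ E, v i * v i = ∑ i ∈ E, (v i)^2 :=
    Finset.sum_congr rfl fun i _ => by ring
  rw [hcongr] at hc
  have hSE : (0:ℝ) ≤ ∑ i ∈ E, (v i)^2 := Finset.sum_nonneg fun i _ => sq_nonneg _
  have hSV : (0:ℝ) ≤ ∑ i, (v i)^2 := Finset.sum_nonneg fun i _ => sq_nonneg _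
  nlinarith [mul_le_mul_of_nonneg_right hδ hSE, mul_le_mul_of_nonneg_right hδ hSV, h.1]

section comb
variable {α : Type*} [DecidableEq α]

lemma pair_sum (f : α → ℝ) (s₁ s₂ : Finset α) (h : ∀ i ∈ s₁, ∀ j ∈ s₂, f i ≤ f j) :
    (s₂.card : ℝ) * ∑ i ∈ s₁, f i ≤ (s₁.card : ℝ) * ∑ j ∈ s₂, f j := by
  have h1 : (s₂.card : ℝ) * ∑ i ∈ s₁, f i = ∑ i ∈ s₁, ∑ _j ∈ s₂, f i := by
    rw [Finset.mul_sum]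
    exact Finset.sum_congr rfl fun i _ => by rw [Finset.sum_const, nsmul_eq_mul]
  have h2 : (s₁.card : ℝ) * ∑ j ∈ s₂, f j = ∑ _i ∈ s₁, ∑ j ∈ s₂, f j := by
    rw [Finset.sum_const, nsmul_eq_mul]
  rw [h1, h2]
  exact Finset.sum_le_sum fun i hi => Finset.sum_le_sum fun j hj => h i hi j hj

lemma dominate_sum (f : α → ℝ) (s₁ s₂ : Finset α) (h : ∀ i ∈ s₁, ∀ j ∈ s₂, f i ≤ f j)
    (hn : ∀ j ∈ s₂, 0 ≤ f j) (hc : s₁.card ≤ s₂.card) :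
    ∑ i ∈ s₁, f i ≤ ∑ j ∈ s₂, f j := by
  rcases Nat.eq_zero_or_pos s₂.card with h0 | h0
  · have : s₁ = ∅ := Finset.card_eq_zero.mp (le_antisymm (h0 ▸ hc) (Nat.zero_le _))
    rw [this, Finset.sum_empty]
    exact Finset.sum_nonneg hn
  · have hp := pair_sum f s₁ s₂ h
    have h2 : (s₁.card : ℝ) * ∑ j ∈ s₂, f j ≤ (s₂.card : ℝ) * ∑ j ∈ s₂, f j := by
      apply mul_le_mul_of_nonneg_right _ (Finset.sum_nonneg hn)
      exact_mod_cast hc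
    have hpos : (0:ℝ) < s₂.card := by exact_mod_cast h0
    nlinarith [hp, h2]

lemma top_avg (f : α → ℝ) (s t : Finset α) (hts : t ⊆ s)
    (h : ∀ j ∈ s \ t, ∀ i ∈ t, f j ≤ f i) (hn : ∀ i ∈ s, 0 ≤ f i) :
    (t.card : ℝ) * ∑ i ∈ s, f i ≤ (s.card : ℝ) * ∑ i ∈ t, f i := by
  have hp := pair_sum f (s \ t) t h
  have hsum : ∑ i ∈ s \ t, f i + ∑ i ∈ t, f i = ∑ i ∈ s, f i := Finset.sum_sdiff hts
  have hcard : (s \ t).card + t.card = s.card := Finset.card_sdiff_add_card_eq_card hts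
  have htn : (0:ℝ) ≤ ∑ i ∈ t, f i := Finset.sum_nonneg fun i hi => hn i (hts hi)
  have hc : ((s \ t).card : ℝ) + (t.card : ℝ) = (s.card : ℝ) := by exact_mod_cast hcard
  nlinarith [hp, htn]

lemma exists_top (f : α → ℝ) : ∀ (r : ℕ) (s : Finset α), r ≤ s.card →
    ∃ t, t ⊆ s ∧ t.card = r ∧ ∀ j ∈ s \ t, ∀ i ∈ t, f j ≤ f i := by
  intro r
  induction r with
  | zero => exact fun s _ => ⟨∅, Finset.empty_subset s, rfl, fun j _ i hi => absurd hi (Finset.notMem_empty i)⟩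
  | succ r ih =>
    intro s hs
    obtain ⟨t, hts, hcard, htop⟩ := ih s (le_trans (Nat.le_succ r) hs)
    have hne : (s \ t).Nonempty := by
      rw [← Finset.card_pos, Finset.card_sdiff_of_subset hts, hcard]
      omega
    obtain ⟨j0, hj0, hmax⟩ := Finset.exists_max_image (s \ t) f hne
    have hj0s : j0 ∈ s := (Finset.mem_sdiff.mp hj0).1
    have hj0t : j0 ∉ t := (Finset.mem_sdiff.mp hj0).2
    refine ⟨insert j0 t, Finset.insert_subset hj0s hts, by rw [Finset.card_insert_of_notMem hj0t, hcard], ?_⟩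
    intro j hj i hi
    have hj' : j ∈ s \ t := by
      rcases Finset.mem_sdiff.mp hj with ⟨hjs, hjn⟩
      exact Finset.mem_sdiff.mpr ⟨hjs, fun hjt => hjn (Finset.mem_insert_of_mem hjt)⟩
    rcases Finset.mem_insert.mp hi with rfl | hit
    · exact hmax j hj'
    · exact htop j hj' i hit
end comb
end helpers

set_option maxHeartbeats 1000000 in
theorem stmt17 {m n k l : ℕ} (A : Matrix (Fin m) (Fin n) ℝ) (xstar : Fin n → ℝ)
    (hsp : (supp xstar).card ≤ k) (hpm : ∀ i, xstar i = 0 ∨ |xstar i| = 1)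
    (b : Fin m → ℝ) (hb : b = A.mulVec xstar)
    (δ : ℝ) (hRIP : RIP A (2*k+l) δ) (hδ : δ ≤ 0.35)
    (xt : Fin n → ℝ) (It : Finset (Fin n)) (hIt : It.card = k) (hxt : lsSol A b It xt)
    (g : Fin n → ℝ) (hg : g = Aᵀ.mulVec (A.mulVec xt - b))
    (MD : Finset (Fin n)) (hMD : MD = supp xstar \ It)
    (T : Finset (Fin n)) (hTsub : T ⊆ Itᶜ) (hTcard : T.card = l)
    (hTtop : ∀ j ∈ T, ∀ j' ∈ Itᶜ \ T, |g j'| ≤ |g j|)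
    (J : Finset (Fin n)) (hJ : J = It ∪ T)
    (z : Fin n → ℝ) (hz : lsSol A b J z)
    (S : Finset (Fin n)) (hSsub : S ⊆ J) (hScard : S.card = k)
    (hStop : ∀ j ∈ S, ∀ j' ∈ J \ S, |z j'| ≤ |z j|)
    (xnext : Fin n → ℝ) (hxnext : lsSol A b S xnext) :
    obj A b xnext ≤ obj A b xt - 0.0001 * min (l : ℝ) (MD.card : ℝ) := by
  classical
  have hδ0 : 0 ≤ δ := hRIP.1
  set X := supp xstar with hXdef
  set w : Fin n → ℝ := fun i => xt i - xstar i with hwdef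
  set u : Fin n → ℝ := fun i => z i - xstar i with hudef
  have hxt0 : ∀ i, i ∉ It → xt i = 0 := fun i hi => by
    by_contra hne; exact hi (hxt.1 (mem_supp.mpr hne))
  have hz0 : ∀ i, i ∉ J → z i = 0 := fun i hi => by
    by_contra hne; exact hi (hz.1 (mem_supp.mpr hne))
  have hx0 : ∀ i, i ∉ X → xstar i = 0 := fun i hi => by
    by_contra hne; exact hi (mem_supp.mpr hne)
  have hx1' : ∀ i ∈ X, |xstar i| = 1 := fun i hi => by
    rcases hpm i with h0 | h1
    · exact absurd h0 (mem_supp.mp hi)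
    · exact h1
  have hx1 : ∀ i ∈ X, (xstar i)^2 = 1 := fun i hi => by
    rw [← sq_abs, hx1' i hi]; norm_num
  have hg0 : ∀ i ∈ It, g i = 0 := fun i hi => by rw [hg]; exact hxt.2 i hi
  have hMDIt : ∀ i ∈ MD, i ∉ It := fun i hi => (Finset.mem_sdiff.mp (hMD ▸ hi)).2
  have hMDX : ∀ i ∈ MD, i ∈ X := fun i hi => (Finset.mem_sdiff.mp (hMD ▸ hi)).1
  have hMDmem : ∀ i, i ∈ X → i ∉ It → i ∈ MD := fun i h1 h2 => hMD ▸ Finset.mem_sdiff.mpr ⟨h1, h2⟩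
  have hwMD : ∀ i, i ∉ It → w i = -xstar i := fun i hi => by
    rw [hwdef]; simp [hxt0 i hi]
  have hAw : A.mulVec w = A.mulVec xt - b := by
    rw [hwdef, mv_sub, hb]; rfl
  have hAu : A.mulVec u = A.mulVec z - b := by
    rw [hudef, mv_sub, hb]; rfl
  have hdisj : Disjoint It T := by
    rw [Finset.disjoint_right]
    intro i hiT
    exact Finset.mem_compl.mp (hTsub hiT)
  have hJcard : J.card = k + l := by
    rw [hJ, Finset.card_union_of_disjoint hdisj, hIt, hTcard]
  have hItJ : It ⊆ J := hJ ▸ Finset.subset_union_left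
  have hsw : supp w ⊆ It ∪ X := by
    apply supp_subset
    intro i hi
    by_cases h1 : i ∈ It
    · exact Finset.mem_union_left _ h1
    · refine Finset.mem_union_right _ ?_
      by_contra h2
      rw [hwdef] at hi
      simp [hxt0 i h1, hx0 i h2] at hi
  have hsu : supp u ⊆ J ∪ X := by
    apply supp_subset
    intro i hi
    by_cases h1 : i ∈ J
    · exact Finset.mem_union_left _ h1
    · refine Finset.mem_union_right _ ?_
      by_contra h2
      rw [hudef] at hi
      simp [hz0 i h1, hx0 i h2] at hi
  have hcw : (supp w).card ≤ 2*k + l := by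
    refine le_trans (Finset.card_le_card hsw) (le_trans (Finset.card_union_le It X) ?_)
    rw [hIt]; omega
  have hcu : (supp u).card ≤ 2*k + l := by
    refine le_trans (Finset.card_le_card hsu) (le_trans (Finset.card_union_le J X) ?_)
    rw [hJcard]; omega
  -- [H1] energy of w on It is small
  have hH1 : ∑ i ∈ It, (w i)^2 ≤ (28/225) * ∑ i, (w i)^2 := by
    apply cross_restr hRIP hδ w It hcw
    rw [hAw, dotp_comm, dotp_A, ← hg, dotp_comm, dotp_restr]
    exact Finset.sum_eq_zero fun i hi => by rw [hg0 i hi, mul_zero]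
  -- [H7] energy of u on J is small
  have hH7 : ∑ i ∈ J, (u i)^2 ≤ (28/225) * ∑ i, (u i)^2 := by
    apply cross_restr hRIP hδ u J hcu
    rw [hAu, dotp_comm, dotp_A, dotp_comm, dotp_restr]
    exact Finset.sum_eq_zero fun i hi => by rw [hz.2 i hi, mul_zero]
  -- splits
  have hWsplit : ∑ i, (w i)^2 = ∑ i ∈ It, (w i)^2 + (MD.card : ℝ) := by
    have h1 : ∑ i ∈ It, (w i)^2 + ∑ i ∈ Itᶜ, (w i)^2 = ∑ i, (w i)^2 :=
      Finset.sum_add_sum_compl It _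
    have hMDc : MD ⊆ Itᶜ := fun i hi => Finset.mem_compl.mpr (hMDIt i hi)
    have h2 : ∑ i ∈ MD, (w i)^2 = ∑ i ∈ Itᶜ, (w i)^2 := by
      apply Finset.sum_subset hMDc
      intro i hi hni
      have hiIt : i ∉ It := Finset.mem_compl.mp hi
      have hiX : i ∉ X := fun hX' => hni (hMDmem i hX' hiIt)
      rw [hwMD i hiIt, hx0 i hiX]
      norm_num
    have h3 : ∑ i ∈ MD, (w i)^2 = (MD.card : ℝ) := by
      have hc : ∀ i ∈ MD, (w i)^2 = 1 := fun i hi => by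
        rw [hwMD i (hMDIt i hi), neg_sq]; exact hx1 i (hMDX i hi)
      rw [Finset.sum_congr rfl hc, Finset.sum_const, nsmul_eq_mul, mul_one]
    linarith only [h1, h2, h3]
  have huJ : ∀ i, i ∉ J → u i = -xstar i := fun i hi => by
    rw [hudef]; simp [hz0 i hi]
  have hUsplit : ∑ i, (u i)^2 = ∑ i ∈ J, (u i)^2 + ((X \ J).card : ℝ) := by
    have h1 : ∑ i ∈ J, (u i)^2 + ∑ i ∈ Jᶜ, (u i)^2 = ∑ i, (u i)^2 :=
      Finset.sum_add_sum_compl J _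
    have hXJc : X \ J ⊆ Jᶜ := fun i hi => Finset.mem_compl.mpr (Finset.mem_sdiff.mp hi).2
    have h2 : ∑ i ∈ X \ J, (u i)^2 = ∑ i ∈ Jᶜ, (u i)^2 := by
      apply Finset.sum_subset hXJc
      intro i hi hni
      have hiJ : i ∉ J := Finset.mem_compl.mp hi
      have hiX : i ∉ X := fun hX' => hni (Finset.mem_sdiff.mpr ⟨hX', hiJ⟩)
      rw [huJ i hiJ, hx0 i hiX]
      norm_num
    have h3 : ∑ i ∈ X \ J, (u i)^2 = ((X \ J).card : ℝ) := by
      have hc : ∀ i ∈ X \ J, (u i)^2 = 1 := fun i hi => by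
        rw [huJ i (Finset.mem_sdiff.mp hi).2, neg_sq]
        exact hx1 i (Finset.mem_sdiff.mp hi).1
      rw [Finset.sum_congr rfl hc, Finset.sum_const, nsmul_eq_mul, mul_one]
    linarith only [h1, h2, h3]
  have hDzD : (X \ J).card ≤ MD.card := by
    refine Finset.card_le_card ?_
    rw [hMD]
    exact Finset.sdiff_subset_sdiff (Finset.Subset.refl _) hItJ
  -- F2 lower bound
  have hF2low : (13/20) * (∑ i, (w i)^2) ≤ ∑ i, ((A.mulVec xt - b) i)^2 := by
    have h1 := rip_low hRIP hcw
    have h2 : ∑ i, (A.mulVec w i)^2 = ∑ i, ((A.mulVec xt - b) i)^2 := by rw [hAw]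
    have h3 : (0:ℝ) ≤ ∑ i, (w i)^2 := Finset.sum_nonneg fun i _ => sq_nonneg _
    have hm := mul_le_mul_of_nonneg_right hδ h3
    rw [h2] at h1
    linarith only [h1, hm, h3]
  -- F2 ≤ sum |g| over MD  and Cauchy-Schwarz
  have hF2abs : ∑ i, ((A.mulVec xt - b) i)^2 ≤ ∑ i ∈ MD, |g i| := by
    have h1 : ∑ i, ((A.mulVec xt - b) i)^2 = dotp (A.mulVec xt - b) (A.mulVec w) := by
      rw [hAw, dotp]
      exact Finset.sum_congr rfl fun i _ => by ring
    have h2 : dotp (A.mulVec xt - b) (A.mulVec w) = ∑ i, g i * w i := by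
      rw [dotp_A, ← hg, dotp]
    have h3 : ∑ i, g i * w i = ∑ i ∈ MD, g i * w i := by
      symm
      apply Finset.sum_subset (Finset.subset_univ MD)
      intro i _ hni
      by_cases hiIt : i ∈ It
      · rw [hg0 i hiIt, zero_mul]
      · have hiX : i ∉ X := fun hX' => hni (hMDmem i hX' hiIt)
        rw [hwMD i hiIt, hx0 i hiX]
        norm_num
    rw [h1, h2, h3]
    apply Finset.sum_le_sum
    intro i hi
    have hwi : w i = -xstar i := hwMD i (hMDIt i hi)
    have hx1i : |xstar i| = 1 := hx1' i (hMDX i hi)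
    calc g i * w i ≤ |g i * w i| := le_abs_self _
      _ = |g i| * |w i| := abs_mul _ _
      _ = |g i| := by rw [hwi, abs_neg, hx1i, mul_one]
  have hCS : (∑ i ∈ MD, |g i|)^2 ≤ (MD.card : ℝ) * ∑ i ∈ MD, (g i)^2 := by
    have h1 := Finset.sum_mul_sq_le_sq_mul_sq MD (fun _ => (1:ℝ)) (fun i => |g i|)
    have h2 : ∑ i ∈ MD, (1:ℝ) * |g i| = ∑ i ∈ MD, |g i| :=
      Finset.sum_congr rfl fun i _ => one_mul _
    have h3 : ∑ i ∈ MD, ((1:ℝ))^2 = (MD.card : ℝ) := by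
      rw [Finset.sum_congr rfl (fun i _ => one_pow 2), Finset.sum_const, nsmul_eq_mul, mul_one]
    have h4 : ∑ i ∈ MD, |g i|^2 = ∑ i ∈ MD, (g i)^2 :=
      Finset.sum_congr rfl fun i _ => sq_abs _
    rw [h2, h3, h4] at h1
    exact h1
  -- [H5] T captures gradient mass
  have hH5 : ((min l MD.card : ℕ) : ℝ) * ∑ i ∈ MD, (g i)^2 ≤ (MD.card : ℝ) * ∑ i ∈ T, (g i)^2 := by
    obtain ⟨T'', hT''sub, hT''card, hT''top⟩ :=
      exists_top (fun i => (g i)^2) (min l MD.card) MD (min_le_right _ _)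
    have havg := top_avg (fun i => (g i)^2) MD T'' hT''sub hT''top (fun i _ => sq_nonneg _)
    have hexch : ∑ i ∈ T'', (g i)^2 ≤ ∑ i ∈ T, (g i)^2 := by
      have hdom : ∀ i ∈ T'' \ T, ∀ j ∈ T \ T'', (g i)^2 ≤ (g j)^2 := by
        intro i hi j hj
        have hiT : i ∉ T := (Finset.mem_sdiff.mp hi).2
        have hiMD : i ∈ MD := hT''sub (Finset.mem_sdiff.mp hi).1
        have hiItc : i ∈ Itᶜ := Finset.mem_compl.mpr (hMDIt i hiMD)
        exact sq_le_of_abs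
          (hTtop j (Finset.mem_sdiff.mp hj).1 i (Finset.mem_sdiff.mpr ⟨hiItc, hiT⟩))
      have hcards : (T'' \ T).card ≤ (T \ T'').card := by
        have c1 := Finset.card_inter_add_card_sdiff T'' T
        have c2 := Finset.card_inter_add_card_sdiff T T''
        have c3 : (T'' ∩ T).card = (T ∩ T'').card := by rw [Finset.inter_comm]
        have c4 : T''.card ≤ T.card := by
          rw [hT''card, hTcard]; exact min_le_left _ _
        omega
      have hds := dominate_sum (fun i => (g i)^2) (T'' \ T) (T \ T'') hdom
        (fun j _ => sq_nonneg _) hcards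
      have e1 := Finset.sum_inter_add_sum_sdiff T'' T (fun i => (g i)^2)
      have e2 := Finset.sum_inter_add_sum_sdiff T T'' (fun i => (g i)^2)
      have e3 : ∑ i ∈ T'' ∩ T, (g i)^2 = ∑ i ∈ T ∩ T'', (g i)^2 := by rw [Finset.inter_comm]
      linarith only [hds, e1, e2, e3]
    have hT''c : ((T''.card : ℕ) : ℝ) = ((min l MD.card : ℕ) : ℝ) := by rw [hT''card]
    rw [← hT''c]
    calc ((T''.card : ℕ) : ℝ) * ∑ i ∈ MD, (g i)^2
        ≤ (MD.card : ℝ) * ∑ i ∈ T'', (g i)^2 := havg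
      _ ≤ (MD.card : ℝ) * ∑ i ∈ T, (g i)^2 :=
        mul_le_mul_of_nonneg_left hexch (Nat.cast_nonneg _)
  -- [H6] progress of z over xt
  have hH6 : ∑ i, ((A.mulVec z - b) i)^2
      ≤ ∑ i, ((A.mulVec xt - b) i)^2 - (20/27) * ∑ i ∈ T, (g i)^2 := by
    set gT := restr g T with hgT
    set y : Fin n → ℝ := fun i => xt i - (20/27) * gT i with hy
    have hGnn' : (0:ℝ) ≤ ∑ i ∈ T, (g i)^2 := Finset.sum_nonneg fun i _ => sq_nonneg _
    have hsy : supp y ⊆ J := by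
      apply supp_subset
      intro i hi
      rw [hJ]
      by_cases h1 : i ∈ It
      · exact Finset.mem_union_left _ h1
      · refine Finset.mem_union_right _ ?_
        by_contra h2
        have hgT0 : gT i = 0 := by rw [hgT]; simp [restr, h2]
        rw [hy] at hi
        simp [hxt0 i h1, hgT0] at hi
    have hki := ki A b hz hsy
    have hyz : (0:ℝ) ≤ ∑ i, (A.mulVec (fun j => y j - z j) i)^2 :=
      Finset.sum_nonneg fun i _ => sq_nonneg _
    have hAy : A.mulVec y - b = fun i => (A.mulVec xt - b) i - (20/27) * A.mulVec gT i := by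
      rw [hy, mv_sub_smul]
      funext i
      simp [Pi.sub_apply]
      ring
    have hexp : ∑ i, ((A.mulVec y - b) i)^2
        = ∑ i, ((A.mulVec xt - b) i)^2
          - 2*(20/27)*(∑ i, (A.mulVec xt - b) i * A.mulVec gT i)
          + (20/27)^2 * ∑ i, (A.mulVec gT i)^2 := by
      rw [hAy]
      exact sum_sq_sub_smul (fun i => (A.mulVec xt - b) i) (A.mulVec gT) (20/27)
    have hdot : ∑ i, (A.mulVec xt - b) i * A.mulVec gT i = ∑ i ∈ T, (g i)^2 := by
      have h1 : ∑ i, (A.mulVec xt - b) i * A.mulVec gT i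
          = dotp (A.mulVec xt - b) (A.mulVec gT) := rfl
      rw [h1, dotp_A, ← hg, dotp_comm, hgT, dotp_restr]
      exact Finset.sum_congr rfl fun i _ => by ring
    have hQT : ∑ i, (A.mulVec gT i)^2 ≤ (27/20) * ∑ i ∈ T, (g i)^2 := by
      have hcard : (supp gT).card ≤ 2*k + l := by
        refine le_trans (Finset.card_le_card (hgT ▸ supp_restr g T)) ?_
        rw [hTcard]; omega
      have h2 := rip_up hRIP hcard
      have h3 : ∑ i, (gT i)^2 = ∑ i ∈ T, (g i)^2 := by rw [hgT]; exact sum_sq_restr g T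
      rw [h3] at h2
      have hm := mul_le_mul_of_nonneg_right hδ hGnn'
      linarith only [h2, hm, hGnn']
    linarith only [hki, hyz, hexp, hdot, hQT, hGnn']
  -- [H8] cost of truncation
  have hH8 : ∑ i, ((A.mulVec xnext - b) i)^2
      ≤ ∑ i, ((A.mulVec z - b) i)^2 + (27/20) * ∑ i ∈ J \ S, (z i)^2 := by
    set zS := restr z S with hzS
    have hPnn' : (0:ℝ) ≤ ∑ i ∈ J \ S, (z i)^2 := Finset.sum_nonneg fun i _ => sq_nonneg _
    have hsupzS : supp zS ⊆ S := hzS ▸ supp_restr z S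
    have h1 := ki A b hxnext hsupzS
    have h2 := ki A b hz (Finset.Subset.trans hsupzS hSsub)
    have hneg : (fun j => zS j - z j) = (fun j => -(restr z (J \ S) j)) := by
      funext j
      rw [hzS]
      by_cases hjS : j ∈ S
      · have hnj : j ∉ J \ S := fun hc => (Finset.mem_sdiff.mp hc).2 hjS
        simp [restr, hjS, hnj]
      · by_cases hjJ : j ∈ J
        · have hmj : j ∈ J \ S := Finset.mem_sdiff.mpr ⟨hjJ, hjS⟩
          simp [restr, hjS, hmj]
        · have hnj : j ∉ J \ S := fun hc => hjJ (Finset.mem_sdiff.mp hc).1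
          simp [restr, hjS, hnj, hz0 j hjJ]
    have h3 : ∑ i, (A.mulVec (fun j => zS j - z j) i)^2
        = ∑ i, (A.mulVec (restr z (J \ S)) i)^2 := by
      rw [hneg, mv_neg]
      exact Finset.sum_congr rfl fun i _ => neg_sq _
    have hcard : (supp (restr z (J \ S))).card ≤ 2*k + l := by
      refine le_trans (Finset.card_le_card (supp_restr z (J \ S))) ?_
      rw [Finset.card_sdiff_of_subset hSsub, hJcard, hScard]; omega
    have h4 := rip_up hRIP hcard
    have h5 : ∑ i, (restr z (J \ S) i)^2 = ∑ i ∈ J \ S, (z i)^2 := sum_sq_restr z (J \ S)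
    rw [h5] at h4
    have hjunk1 : (0:ℝ) ≤ ∑ i, (A.mulVec (fun j => zS j - xnext j) i)^2 :=
      Finset.sum_nonneg fun i _ => sq_nonneg _
    have hmul := mul_le_mul_of_nonneg_right hδ hPnn'
    linarith only [h1, h2, h3, h4, hjunk1, hmul, hPnn']
  -- [H9] dropped mass bounded by u's energy on J
  have hzu : ∀ i, i ∉ X → z i = u i := fun i hi => by
    rw [hudef]; simp [hx0 i hi]
  have c1 := Finset.card_inter_add_card_sdiff S X
  have c2 := Finset.card_inter_add_card_sdiff X J
  have cJX : ((J \ S) ∩ X).card + (S ∩ X).card ≤ (X ∩ J).card := by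
    have hdisjSS : Disjoint ((J \ S) ∩ X) (S ∩ X) := by
      apply Finset.disjoint_left.mpr
      intro a ha hb
      exact (Finset.mem_sdiff.mp (Finset.mem_inter.mp ha).1).2 (Finset.mem_inter.mp hb).1
    have hsubJX : ((J \ S) ∩ X) ∪ (S ∩ X) ⊆ X ∩ J := by
      intro a ha
      rcases Finset.mem_union.mp ha with h | h
      · rcases Finset.mem_inter.mp h with ⟨ha1, ha2⟩
        exact Finset.mem_inter.mpr ⟨ha2, (Finset.mem_sdiff.mp ha1).1⟩
      · rcases Finset.mem_inter.mp h with ⟨ha1, ha2⟩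
        exact Finset.mem_inter.mpr ⟨ha2, hSsub ha1⟩
    calc ((J \ S) ∩ X).card + (S ∩ X).card
        = (((J \ S) ∩ X) ∪ (S ∩ X)).card := (Finset.card_union_of_disjoint hdisjSS).symm
      _ ≤ (X ∩ J).card := Finset.card_le_card hsubJX
  have hH9 : ∑ i ∈ J \ S, (z i)^2 ≤ ∑ i ∈ J, (u i)^2 := by
    have hcard9 : ((J \ S) ∩ X).card ≤ (S \ X).card := by omega
    have hdom : ∀ i ∈ (J \ S) ∩ X, ∀ j ∈ S \ X, (z i)^2 ≤ (z j)^2 := fun i hi j hj =>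
      sq_le_of_abs (hStop j (Finset.mem_sdiff.mp hj).1 i (Finset.mem_inter.mp hi).1)
    have hd1 := dominate_sum (fun i => (z i)^2) ((J \ S) ∩ X) (S \ X) hdom
      (fun j _ => sq_nonneg _) hcard9
    have e1 := Finset.sum_inter_add_sum_sdiff (J \ S) X (fun i => (z i)^2)
    have e2 : ∑ i ∈ S \ X, (z i)^2 = ∑ i ∈ S \ X, (u i)^2 :=
      Finset.sum_congr rfl fun i hi => by rw [hzu i (Finset.mem_sdiff.mp hi).2]
    have e3 : ∑ i ∈ (J \ S) \ X, (z i)^2 = ∑ i ∈ (J \ S) \ X, (u i)^2 :=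
      Finset.sum_congr rfl fun i hi => by rw [hzu i (Finset.mem_sdiff.mp hi).2]
    have hdisj2 : Disjoint (S \ X) ((J \ S) \ X) := by
      apply Finset.disjoint_left.mpr
      intro a ha hb
      exact (Finset.mem_sdiff.mp (Finset.mem_sdiff.mp hb).1).2 (Finset.mem_sdiff.mp ha).1
    have hsubJ : (S \ X) ∪ ((J \ S) \ X) ⊆ J := by
      intro a ha
      rcases Finset.mem_union.mp ha with h | h
      · exact hSsub (Finset.mem_sdiff.mp h).1
      · exact (Finset.mem_sdiff.mp (Finset.mem_sdiff.mp h).1).1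
    have e4 : ∑ i ∈ S \ X, (u i)^2 + ∑ i ∈ (J \ S) \ X, (u i)^2 ≤ ∑ i ∈ J, (u i)^2 := by
      rw [← Finset.sum_union hdisj2]
      exact Finset.sum_le_sum_of_subset_of_nonneg hsubJ (fun i _ _ => sq_nonneg _)
    linarith only [hd1, e1, e2, e3, e4]
  -- [H10] dropped mass, per-coordinate version
  have hH10 : ((X \ J).card : ℝ) * ∑ i ∈ J \ S, (z i)^2 ≤ (l : ℝ) * ∑ i ∈ J, (u i)^2 := by
    have hdom : ∀ i ∈ J \ S, ∀ j ∈ S \ X, (z i)^2 ≤ (z j)^2 := fun i hi j hj =>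
      sq_le_of_abs (hStop j (Finset.mem_sdiff.mp hj).1 i hi)
    have hps := pair_sum (fun i => (z i)^2) (J \ S) (S \ X) hdom
    have hJScard : (J \ S).card = l := by
      rw [Finset.card_sdiff_of_subset hSsub, hJcard, hScard]; omega
    have e2 : ∑ i ∈ S \ X, (z i)^2 = ∑ i ∈ S \ X, (u i)^2 :=
      Finset.sum_congr rfl fun i hi => by rw [hzu i (Finset.mem_sdiff.mp hi).2]
    have e5 : ∑ i ∈ S \ X, (u i)^2 ≤ ∑ i ∈ J, (u i)^2 :=
      Finset.sum_le_sum_of_subset_of_nonneg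
        (fun a ha => hSsub (Finset.mem_sdiff.mp ha).1) (fun i _ _ => sq_nonneg _)
    have hcard10 : (X \ J).card ≤ (S \ X).card := by omega
    have hPnn' : (0:ℝ) ≤ ∑ i ∈ J \ S, (z i)^2 := Finset.sum_nonneg fun i _ => sq_nonneg _
    have step1 : ((X \ J).card : ℝ) * ∑ i ∈ J \ S, (z i)^2
        ≤ ((S \ X).card : ℝ) * ∑ i ∈ J \ S, (z i)^2 :=
      mul_le_mul_of_nonneg_right (by exact_mod_cast hcard10) hPnn'
    have step2 : ((J \ S).card : ℝ) = (l : ℝ) := by rw [hJScard]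
    have step3 : (l : ℝ) * ∑ i ∈ S \ X, (z i)^2 ≤ (l : ℝ) * ∑ i ∈ J, (u i)^2 := by
      rw [e2]
      exact mul_le_mul_of_nonneg_left e5 (Nat.cast_nonneg _)
    rw [step2] at hps
    linarith only [step1, hps, step3]
  -- nonnegativity
  have hPnn : (0:ℝ) ≤ ∑ i ∈ J \ S, (z i)^2 := Finset.sum_nonneg fun i _ => sq_nonneg _
  have hΓnn : (0:ℝ) ≤ ∑ i ∈ T, (g i)^2 := Finset.sum_nonneg fun i _ => sq_nonneg _
  have hSignn : (0:ℝ) ≤ ∑ i ∈ MD, (g i)^2 := Finset.sum_nonneg fun i _ => sq_nonneg _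
  have hUJnn : (0:ℝ) ≤ ∑ i ∈ J, (u i)^2 := Finset.sum_nonneg fun i _ => sq_nonneg _
  have hWItnn : (0:ℝ) ≤ ∑ i ∈ It, (w i)^2 := Finset.sum_nonneg fun i _ => sq_nonneg _
  have hU2nn : (0:ℝ) ≤ ∑ i, (u i)^2 := Finset.sum_nonneg fun i _ => sq_nonneg _
  have hF2nn : (0:ℝ) ≤ ∑ i, ((A.mulVec xt - b) i)^2 := Finset.sum_nonneg fun i _ => sq_nonneg _
  -- derived bounds
  have hUJb : ∑ i ∈ J, (u i)^2 ≤ (28/197) * ((X \ J).card : ℝ) := by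
    have := hH7
    rw [hUsplit] at this
    linarith
  have hF2D : (13/20) * (MD.card : ℝ) ≤ ∑ i, ((A.mulVec xt - b) i)^2 := by
    rw [hWsplit] at hF2low
    linarith
  rw [obj_eq, obj_eq]
  set F2 := ∑ i, ((A.mulVec xt - b) i)^2 with hF2d
  set Z2 := ∑ i, ((A.mulVec z - b) i)^2 with hZ2d
  set N2s := ∑ i, ((A.mulVec xnext - b) i)^2 with hN2d
  set Gam := ∑ i ∈ T, (g i)^2 with hGamd
  set Sig := ∑ i ∈ MD, (g i)^2 with hSigd
  set Pd := ∑ i ∈ J \ S, (z i)^2 with hPd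
  set UJ := ∑ i ∈ J, (u i)^2 with hUJd
  set DR := (MD.card : ℝ) with hDRd
  set DzR := ((X \ J).card : ℝ) with hDzRd
  clear_value F2 Z2 N2s Gam Sig Pd UJ DR DzR
  -- case analysis
  rcases Nat.eq_zero_or_pos l with hl0 | hl1
  · -- l = 0 : S = J, no truncation
    have hSJ : S = J := Finset.eq_of_subset_of_card_le hSsub (by rw [hJcard, hScard, hl0]; omega)
    have hP0 : Pd = 0 := by rw [hPd, hSJ, Finset.sdiff_self, Finset.sum_empty]
    have hmin : min (l:ℝ) DR = 0 := by
      rw [hl0, hDRd]; norm_num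
    rw [hmin]
    rw [hP0] at hH8
    linarith only [hH6, hH8, hΓnn]
  · rcases Nat.eq_zero_or_pos MD.card with hD0 | hD1
    · -- MD empty
      have hmin : min (l:ℝ) DR = 0 := by
        rw [hDRd, hD0]; simp
      rw [hmin]
      have hDz0 : (X \ J).card = 0 := by omega
      have hDzR0 : DzR = 0 := by rw [hDzRd, hDz0]; norm_num
      rw [hDzR0] at hUJb
      linarith only [hH6, hH8, hH9, hUJb, hΓnn, hPnn]
    · -- main case : l ≥ 1, MD.card ≥ 1
      have hrmin : ((min l MD.card : ℕ) : ℝ) = min (l:ℝ) DR := by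
        rw [hDRd]; push_cast [Nat.cast_min]; rfl
      have hDR1 : (1:ℝ) ≤ DR := by rw [hDRd]; exact_mod_cast hD1
      have hrnn : (0:ℝ) ≤ min (l:ℝ) DR := le_min (Nat.cast_nonneg _) (by rw [hDRd]; positivity)
      -- gradient mass lower bound : Gam ≥ (169/400) r
      have hGr : (169/400) * min (l:ℝ) DR ≤ Gam := by
        have hF2sq : (169/400) * DR^2 ≤ F2^2 := by nlinarith only [hF2D, hDR1]
        have habs : (0:ℝ) ≤ ∑ i ∈ MD, |g i| := Finset.sum_nonneg fun i _ => abs_nonneg _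
        have hc1 : F2^2 ≤ DR * Sig := by nlinarith only [hF2abs, hCS, hF2nn, habs]
        rw [hrmin] at hH5
        have s1 : min (l:ℝ) DR * F2^2 ≤ min (l:ℝ) DR * (DR * Sig) :=
          mul_le_mul_of_nonneg_left hc1 hrnn
        have s2 : min (l:ℝ) DR * (DR * Sig) = DR * (min (l:ℝ) DR * Sig) := by ring
        have s3 : DR * (min (l:ℝ) DR * Sig) ≤ DR * (DR * Gam) :=
          mul_le_mul_of_nonneg_left hH5 (by linarith)
        have s4 : min (l:ℝ) DR * ((169/400) * DR^2) ≤ min (l:ℝ) DR * F2^2 :=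
          mul_le_mul_of_nonneg_left hF2sq hrnn
        have hGr0 : (0:ℝ) ≤ Gam := by
          have := mul_le_mul_of_nonneg_left hSignn hrnn
          nlinarith only [s3, hSignn, hrnn, hDR1, hΓnn]
        have s5 : (169/400) * (min (l:ℝ) DR) * DR^2 ≤ DR^2 * Gam := by nlinarith only [s1, s2, s3, s4]
        have hDRsq : (1:ℝ) ≤ DR^2 := by nlinarith only [hDR1]
        nlinarith only [s5, hDRsq, hrnn, hΓnn]
      rcases le_or_gt l MD.card with hlD | hlD
      · -- r = l
        have hminl : min (l:ℝ) DR = (l:ℝ) := min_eq_left (by rw [hDRd]; exact_mod_cast hlD)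
        rw [hminl]
        rw [hminl] at hGr
        rcases Nat.eq_zero_or_pos (X \ J).card with hDz0 | hDz1
        · have hDzR0 : DzR = 0 := by rw [hDzRd, hDz0]; norm_num
          rw [hDzR0] at hUJb
          have hlnn : (0:ℝ) ≤ (l:ℝ) := Nat.cast_nonneg _
          linarith only [hH6, hH8, hH9, hUJb, hGr, hPnn, hlnn]
        · have hDzR1 : (1:ℝ) ≤ DzR := by rw [hDzRd]; exact_mod_cast hDz1
          have hPl : Pd ≤ (28/197) * (l:ℝ) := by
            have h1 : DzR * Pd ≤ (l:ℝ) * ((28/197) * DzR) := by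
              have h2 := mul_le_mul_of_nonneg_left hUJb (Nat.cast_nonneg l : (0:ℝ) ≤ (l:ℝ))
              linarith only [hH10, h2]
            nlinarith only [h1, hDzR1, hPnn, (Nat.cast_nonneg l : (0:ℝ) ≤ (l:ℝ))]
          linarith only [hH6, hH8, hPl, hGr, (Nat.cast_nonneg l : (0:ℝ) ≤ (l:ℝ))]
      · -- r = MD.card
        have hminD : min (l:ℝ) DR = DR := min_eq_right (by rw [hDRd]; exact_mod_cast hlD.le)
        rw [hminD]
        rw [hminD] at hGr
        have hDzDR : DzR ≤ DR := by rw [hDzRd, hDRd]; exact_mod_cast hDzD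
        have hPD : Pd ≤ (28/197) * DR := by linarith only [hH9, hUJb, hDzDR]
        linarith only [hH6, hH8, hPD, hGr, hDR1]
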